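/- Let k be an n×n positive semidefinite matrix, let s₁,…,sₙ ∈ ℂ, and let Λ_s be the diagonal matrix with entries s₁,…,sₙ. Suppose the matrix with entries (4 − s_i·conj(s_j))·k(i,j) is positive semidefinite. If v ∈ ℂⁿ satisfies k·v = 0, then k·(Λ_s·v) = 0. -/

import Mathlib

open scoped ComplexOrder

theorem stmt7 (n : ℕ) (k : Matrix (Fin n) (Fin n) ℂ) (hk : k.PosSemidef)
    (s : Fin n → ℂ)
    (hM : (Matrix.of fun i j => (4 - s i * (starRingEnd ℂ) (s j)) * k i j).PosSemidef)
    (v : Fin n → ℂ) (hv : k.mulVec v = 0) :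
    k.mulVec ((Matrix.diagonal s).mulVec v) = 0 := by
  -- Step 1: kernel of k is invariant under diagonal (star s)
  have L : ∀ x : Fin n → ℂ, k.mulVec x = 0 →
      k.mulVec (fun i => (starRingEnd ℂ) (s i) * x i) = 0 := by
    intro x hx
    set u : Fin n → ℂ := fun i => (starRingEnd ℂ) (s i) * x i with hu
    rw [← hk.dotProduct_mulVec_zero_iff]
    have key : dotProduct (star x)
        ((Matrix.of fun i j => (4 - s i * (starRingEnd ℂ) (s j)) * k i j).mulVec x)
        = 4 * dotProduct (star x) (k.mulVec x)
          - dotProduct (star u) (k.mulVec u) := by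
      simp only [dotProduct, Matrix.mulVec, Matrix.of_apply, Pi.star_apply, hu,
        Finset.mul_sum, ← Finset.sum_sub_distrib, star_mul', Complex.star_def,
        RingHomCompTriple.comp_apply, RingHom.id_apply, starRingEnd_self_apply]
      refine Finset.sum_congr rfl fun i _ => Finset.sum_congr rfl fun j _ => ?_
      ring
    have h1 := hM.dotProduct_mulVec_nonneg x
    have h2 : (0:ℂ) ≤ dotProduct (star u) (k.mulVec u) := hk.dotProduct_mulVec_nonneg u
    rw [key, hx, dotProduct_zero, mul_zero, zero_sub] at h1
    exact le_antisymm (neg_nonneg.mp h1) h2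
  -- Step 2: for any polynomial p, k ∘ (p(s̄ᵢ) • ·) kills v
  have P : ∀ p : Polynomial ℂ,
      k.mulVec (fun i => p.eval ((starRingEnd ℂ) (s i)) * v i) = 0 := by
    intro p
    induction p using Polynomial.induction_on with
    | C a =>
      have : (fun i => (Polynomial.C a).eval ((starRingEnd ℂ) (s i)) * v i) = a • v := by
        funext i; simp [Pi.smul_apply, smul_eq_mul]
      rw [this, Matrix.mulVec_smul, hv, smul_zero]
    | add p q hp hq =>
      have : (fun i => (p + q).eval ((starRingEnd ℂ) (s i)) * v i)
          = (fun i => p.eval ((starRingEnd ℂ) (s i)) * v i)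
            + (fun i => q.eval ((starRingEnd ℂ) (s i)) * v i) := by
        funext i; simp [add_mul]
      rw [this, Matrix.mulVec_add, hp, hq, add_zero]
    | monomial m a hm =>
      have := L _ hm
      have heq : (fun i => (Polynomial.C a * Polynomial.X ^ (m + 1)).eval
            ((starRingEnd ℂ) (s i)) * v i)
          = fun i => (starRingEnd ℂ) (s i) *
              ((Polynomial.C a * Polynomial.X ^ m).eval ((starRingEnd ℂ) (s i)) * v i) := by
        funext i; simp [pow_succ]; ring
      rw [heq]; exact this
  -- Step 3: interpolate z ↦ star z on the nodes s̄ᵢ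
  classical
  set T : Finset ℂ := Finset.image (fun i => (starRingEnd ℂ) (s i)) Finset.univ with hT
  set p : Polynomial ℂ := Lagrange.interpolate T id (fun z => (starRingEnd ℂ) z) with hp
  have hval : ∀ i, p.eval ((starRingEnd ℂ) (s i)) = s i := by
    intro i
    have hmem : (starRingEnd ℂ) (s i) ∈ T := Finset.mem_image_of_mem _ (Finset.mem_univ i)
    have := Lagrange.eval_interpolate_at_node (fun z => (starRingEnd ℂ) z)
      (Set.injOn_id _) hmem
    simpa [hp] using this
  have hfinal : (Matrix.diagonal s).mulVec v
      = fun i => p.eval ((starRingEnd ℂ) (s i)) * v i := by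
    funext i
    rw [Matrix.mulVec_diagonal, hval]
  rw [hfinal]
  exact P p
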